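/- Let G be a connected plane graph with minimum degree at least 2 and girth at least 7. Then G contains a path on three vertices whose degree sum is at most 9. -/

import Mathlib

open SimpleGraph


/-- A combinatorial (oriented, 2-cell) embedding of a simple graph, given by a
rotation-style successor permutation on darts whose cycles are exactly the sets
of darts leaving a common vertex.  Faces are the cycles of the permutation
`d ↦ next d.symm`. -/
structure PlaneEmbedding {V : Type} (G : SimpleGraph V) where
  next : Equiv.Perm G.Dart
  next_fst : ∀ d : G.Dart, (next d).fst = d.fst
  cycle_of_fst : ∀ d d' : G.Dart, d.fst = d'.fst → next.SameCycle d d'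

namespace PlaneEmbedding

variable {V : Type} {G : SimpleGraph V} (E : PlaneEmbedding G)

/-- The face permutation on darts. -/
def facePerm : Equiv.Perm G.Dart :=
  (Function.Involutive.toPerm Dart.symm fun d => Dart.symm_symm d).trans E.next

/-- The setoid on darts identifying darts lying on the same face. -/
def faceSetoid : Setoid G.Dart :=
  ⟨E.facePerm.SameCycle, ⟨fun _ => Equiv.Perm.SameCycle.refl _ _,
    Equiv.Perm.SameCycle.symm, Equiv.Perm.SameCycle.trans⟩⟩

/-- The number of faces of the embedding. -/
noncomputable def faceCount : ℕ := Nat.card (Quotient E.faceSetoid)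

/-- The size (degree) of the face containing the dart `d`. -/
noncomputable def faceSize (d : G.Dart) : ℕ :=
  Nat.card {d' : G.Dart // E.facePerm.SameCycle d d'}

/-- Euler's formula `|V| - |E| + |F| = 2`: the embedding is in the plane. -/
def EulerFormula : Prop :=
  (Nat.card V : ℤ) - Nat.card G.edgeSet + E.faceCount = 2

end PlaneEmbedding


namespace Stmt13Aux
set_option linter.unusedSectionVars false


def HN : ℕ → ℕ
  | 2 => 0 | 3 => 10 | 4 => 15 | 5 => 18 | _ => 20

def chkp (s : ℕ) : ℕ → ℕ → ℕ → ℕ → ℕ → ℕ → ℕ → Bool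
  | 0, _, _, _, _, _, _ => false
  | (fuel+1), k, hn, p, q, a, b =>
    if 60 ≤ hn then true
    else if s ≤ k then decide (a + b + p < 10) || decide (b + p + q < 10)
    else
      let f := fun v : ℕ => (decide (a + b + v < 10)) ||
        chkp s fuel (k+1) (hn + HN v) p q b v
      f 2 && f 3 && f 4 && f 5 && f 6

def chktop (s : ℕ) : Bool :=
  let g := fun p q : ℕ => chkp s s 2 (HN p + HN q) p q p q
  let g2 := fun p : ℕ => g p 2 && g p 3 && g p 4 && g p 5 && g p 6
  g2 2 && g2 3 && g2 4 && g2 5 && g2 6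

theorem chkp_sound (s : ℕ) (y : ℕ → ℕ) (hy2 : ∀ j, 2 ≤ y j) (hy6 : ∀ j, y j ≤ 6)
    (hwin : ∀ j, 10 ≤ y j + y (j+1) + y (j+2))
    (hyper : ∀ j, y (j + s) = y j) (hs : 3 ≤ s) :
    ∀ fuel k, 2 ≤ k → k ≤ s → s - k + 1 ≤ fuel →
    chkp s fuel k (∑ j ∈ Finset.range k, HN (y j)) (y 0) (y 1) (y (k-2)) (y (k-1)) = true →
    60 ≤ ∑ j ∈ Finset.range s, HN (y j) := by
  intro fuel
  induction fuel with
  | zero => intro k h2 hks hf; omega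
  | succ fuel ih =>
    intro k h2 hks hf hc
    rw [chkp] at hc
    split at hc
    · -- 60 ≤ partial sum
      calc (60:ℕ) ≤ _ := ‹60 ≤ _›
        _ ≤ _ := Finset.sum_le_sum_of_subset (Finset.range_subset_range.2 hks)
    · split at hc
      · -- leaf case k ≥ s, so k = s : contradiction with windows
        exfalso
        have hk : k = s := le_antisymm hks ‹s ≤ k›
        rw [hk] at hc
        have h1 : 10 ≤ y (s-2) + y (s-1) + y 0 := by
          have := hwin (s-2)
          have e1 : s - 2 + 1 = s - 1 := by omega
          have e2 : s - 2 + 2 = s := by omega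
          rw [e1, e2] at this
          have e3 : y s = y 0 := by simpa using hyper 0
          omega
        have h2' : 10 ≤ y (s-1) + y 0 + y 1 := by
          have := hwin (s-1)
          have e1 : s - 1 + 1 = s := by omega
          have e2 : s - 1 + 2 = s + 1 := by omega
          rw [e1, e2] at this
          have e3 : y s = y 0 := by simpa using hyper 0
          have e4 : y (s+1) = y 1 := by
            have h5 := hyper 1; rwa [Nat.add_comm] at h5
          omega
        simp only [Bool.or_eq_true, decide_eq_true_eq] at hc
        omega
      · -- recursive case, k < s
        have hklt : k < s := by omega
        simp only [Bool.and_eq_true] at hc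
        obtain ⟨⟨⟨⟨c2, c3⟩, c4⟩, c5⟩, c6⟩ := hc
        have hcv : ((decide (y (k-2) + y (k-1) + y k < 10)) ||
            chkp s fuel (k+1) ((∑ j ∈ Finset.range k, HN (y j)) + HN (y k))
              (y 0) (y 1) (y (k-1)) (y k)) = true := by
          have h25 : y k = 2 ∨ y k = 3 ∨ y k = 4 ∨ y k = 5 ∨ y k = 6 := by
            have := hy2 k; have := hy6 k; omega
          rcases h25 with hv|hv|hv|hv|hv <;> rw [hv] <;> assumption
        have hwk : 10 ≤ y (k-2) + y (k-1) + y k := by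
          have := hwin (k-2)
          have e1 : k - 2 + 1 = k - 1 := by omega
          have e2 : k - 2 + 2 = k := by omega
          rw [e1, e2] at this
          exact this
        simp only [Bool.or_eq_true, decide_eq_true_eq] at hcv
        rcases hcv with hbad | hrec
        · omega
        · have := ih (k+1) (by omega) (by omega) (by omega)
          rw [Finset.sum_range_succ] at this
          have e1 : k + 1 - 2 = k - 1 := by omega
          have e2 : k + 1 - 1 = k := by omega
          rw [e1, e2] at this
          exact this hrec
set_option maxHeartbeats 2000000 in
theorem chk7 : chktop 7 = true := by decide

set_option maxHeartbeats 2000000 in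
theorem chk8 : chktop 8 = true := by decide

theorem chktop_elim {s : ℕ} (h : chktop s = true) (p q : ℕ) (hp : 2 ≤ p) (hp6 : p ≤ 6)
    (hq : 2 ≤ q) (hq6 : q ≤ 6) : chkp s s 2 (HN p + HN q) p q p q = true := by
  unfold chktop at h
  simp only [Bool.and_eq_true] at h
  have hp' : p = 2 ∨ p = 3 ∨ p = 4 ∨ p = 5 ∨ p = 6 := by omega
  have hq' : q = 2 ∨ q = 3 ∨ q = 4 ∨ q = 5 ∨ q = 6 := by omega
  rcases hp' with rfl|rfl|rfl|rfl|rfl <;> rcases hq' with rfl|rfl|rfl|rfl|rfl <;> tauto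

theorem small_sum (s : ℕ) (hs : s = 7 ∨ s = 8) (y : ℕ → ℕ) (hy2 : ∀ j, 2 ≤ y j)
    (hy6 : ∀ j, y j ≤ 6) (hwin : ∀ j, 10 ≤ y j + y (j+1) + y (j+2))
    (hyper : ∀ j, y (j + s) = y j) :
    60 ≤ ∑ j ∈ Finset.range s, HN (y j) := by
  have hchk : chktop s = true := by rcases hs with rfl|rfl; exacts [chk7, chk8]
  have h3 : 3 ≤ s := by omega
  refine chkp_sound s y hy2 hy6 hwin hyper h3 s 2 (by omega) (by omega) (by omega) ?_
  have hsum : ∑ j ∈ Finset.range 2, HN (y j) = HN (y 0) + HN (y 1) := by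
    simp [Finset.sum_range_succ]
  rw [hsum]
  exact chktop_elim hchk (y 0) (y 1) (hy2 0) (hy6 0) (hy2 1) (hy6 1)

/-- The weight function `1/2 - 1/n`. -/
def hw (n : ℕ) : ℚ := 1/2 - 1/n

theorem hw_mono {a b : ℕ} (h2 : 2 ≤ a) (hab : a ≤ b) : hw a ≤ hw b := by
  unfold hw
  have ha : (0:ℚ) < a := by exact_mod_cast (by omega : 0 < a)
  have : (1:ℚ)/b ≤ 1/a := by
    apply one_div_le_one_div_of_le ha
    exact_mod_cast hab
  linarith

theorem hw_eq_HN {n : ℕ} (h2 : 2 ≤ n) (h6 : n ≤ 6) : (HN n : ℚ) / 60 ≤ hw n := by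
  interval_cases n <;> norm_num [hw, HN]

theorem window3 {a b c : ℕ} (ha : 2 ≤ a) (ha6 : a ≤ 6) (hb : 2 ≤ b) (hb6 : b ≤ 6)
    (hc : 2 ≤ c) (hc6 : c ≤ 6) (hsum : 10 ≤ a + b + c) :
    (1:ℚ)/3 ≤ hw a + hw b + hw c := by
  interval_cases a <;> interval_cases b <;> interval_cases c <;>
    first | (exfalso; omega) | norm_num [hw]

theorem sum_shift (m : ℕ) (f : ℕ → ℚ) (hf : f m = f 0) :
    ∑ j ∈ Finset.range m, f (j+1) = ∑ j ∈ Finset.range m, f j := by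
  have h1 : ∑ j ∈ Finset.range (m+1), f j = (∑ j ∈ Finset.range m, f (j+1)) + f 0 :=
    Finset.sum_range_succ' f m
  have h2 : ∑ j ∈ Finset.range (m+1), f j = (∑ j ∈ Finset.range m, f j) + f m :=
    Finset.sum_range_succ f m
  rw [hf] at h2
  linarith

theorem seqLemma (m : ℕ) (hm : 7 ≤ m) (x : ℕ → ℕ) (h2 : ∀ k, 2 ≤ x k)
    (hper : ∀ k, x (k + m) = x k) (hwin : ∀ k, 10 ≤ x k + x (k+1) + x (k+2)) :
    1 ≤ ∑ j ∈ Finset.range m, hw (x j) := by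
  set y : ℕ → ℕ := fun k => min (x k) 6 with hy
  have hy2 : ∀ k, 2 ≤ y k := fun k => le_min (h2 k) (by norm_num)
  have hy6 : ∀ k, y k ≤ 6 := fun k => min_le_right _ _
  have hywin : ∀ k, 10 ≤ y k + y (k+1) + y (k+2) := by
    intro k
    have := hwin k; have := h2 k; have := h2 (k+1); have := h2 (k+2)
    simp only [hy]; omega
  have hyper : ∀ k, y (k+m) = y k := fun k => by simp only [hy, hper k]
  have hmono : ∑ j ∈ Finset.range m, hw (y j) ≤ ∑ j ∈ Finset.range m, hw (x j) :=
    Finset.sum_le_sum (fun j _ => hw_mono (hy2 j) (min_le_left _ _))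
  have hy0 : y m = y 0 := by simpa using hyper 0
  have hy1 : y (m+1) = y 1 := by have h5 := hyper 1; rwa [Nat.add_comm] at h5
  suffices h : 1 ≤ ∑ j ∈ Finset.range m, hw (y j) by linarith
  by_cases hm9 : 9 ≤ m
  · have key : ∀ j, (1:ℚ)/3 ≤ hw (y j) + hw (y (j+1)) + hw (y (j+2)) := fun j =>
      window3 (hy2 j) (hy6 j) (hy2 _) (hy6 _) (hy2 _) (hy6 _) (hywin j)
    have shift1 : ∑ j ∈ Finset.range m, hw (y (j+1)) = ∑ j ∈ Finset.range m, hw (y j) :=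
      sum_shift m (fun j => hw (y j)) (by simp [hy0])
    have shift2 : ∑ j ∈ Finset.range m, hw (y (j+2)) = ∑ j ∈ Finset.range m, hw (y (j+1)) := by
      have := sum_shift m (fun j => hw (y (j+1))) (by simp [hy1])
      simpa using this
    have htriple : ∑ j ∈ Finset.range m, (hw (y j) + hw (y (j+1)) + hw (y (j+2)))
        = 3 * ∑ j ∈ Finset.range m, hw (y j) := by
      rw [Finset.sum_add_distrib, Finset.sum_add_distrib, shift1, shift2, shift1]
      ring
    have hlow : (m : ℚ) * (1/3) ≤ ∑ j ∈ Finset.range m, (hw (y j) + hw (y (j+1)) + hw (y (j+2))) := by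
      calc (m:ℚ) * (1/3) = ∑ _j ∈ Finset.range m, ((1:ℚ)/3) := by
            rw [Finset.sum_const, Finset.card_range, nsmul_eq_mul]
        _ ≤ _ := Finset.sum_le_sum (fun j _ => key j)
    have hm' : (9:ℚ) ≤ (m:ℚ) := by exact_mod_cast hm9
    rw [htriple] at hlow
    linarith
  · have hs : m = 7 ∨ m = 8 := by omega
    have h60 := small_sum m hs y hy2 hy6 hywin hyper
    have hcast : (60:ℚ) ≤ ∑ j ∈ Finset.range m, ((HN (y j) : ℚ)) := by
      have := h60
      exact_mod_cast Nat.cast_le.mpr h60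
    have hle : ∑ j ∈ Finset.range m, ((HN (y j):ℚ)/60) ≤ ∑ j ∈ Finset.range m, hw (y j) :=
      Finset.sum_le_sum (fun j _ => hw_eq_HN (hy2 j) (hy6 j))
    rw [← Finset.sum_div] at hle
    linarith


section Graph
variable {V : Type} {G : SimpleGraph V}


/-- Walk along a chain of adjacent vertices. -/
def chainWalk (v : ℕ → V) (hadj : ∀ k, G.Adj (v k) (v (k+1))) : (n : ℕ) → G.Walk (v 0) (v n)
  | 0 => SimpleGraph.Walk.nil
  | (n+1) => (chainWalk v hadj n).concat (hadj n)

theorem chainWalk_length (v : ℕ → V) (hadj : ∀ k, G.Adj (v k) (v (k+1))) (n : ℕ) :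
    (chainWalk v hadj n).length = n := by
  induction n with
  | zero => rfl
  | succ n ih => rw [chainWalk, SimpleGraph.Walk.length_concat, ih]

theorem chainWalk_support (v : ℕ → V) (hadj : ∀ k, G.Adj (v k) (v (k+1))) (n : ℕ) :
    (chainWalk v hadj n).support = (List.range (n+1)).map v := by
  induction n with
  | zero => rfl
  | succ n ih =>
    rw [chainWalk, SimpleGraph.Walk.support_concat, ih, List.range_succ (n := n+1),
      List.map_append]
    simp

theorem chainWalk_edges (v : ℕ → V) (hadj : ∀ k, G.Adj (v k) (v (k+1))) (n : ℕ) :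
    (chainWalk v hadj n).edges = (List.range n).map (fun k => s(v k, v (k+1))) := by
  induction n with
  | zero => rfl
  | succ n ih =>
    rw [chainWalk, SimpleGraph.Walk.edges_concat, ih, List.range_succ, List.map_append]
    simp

/-- From a closed non-backtracking-ish walk of period `m`, the girth bound gives `7 ≤ m`. -/
theorem seven_le_period (hgirth : 7 ≤ G.egirth) (v : ℕ → V)
    (hadj : ∀ k, G.Adj (v k) (v (k+1))) (h2 : ∀ k, v (k+2) ≠ v k)
    (m : ℕ) (hm : 0 < m) (hper : ∀ k, v (k + m) = v k) : 7 ≤ m := by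
  classical
  letI : DecidablePred (fun g : ℕ => 0 < g ∧ ∃ i, v (i + g) = v i) := Classical.decPred _
  have hex : ∃ g : ℕ, 0 < g ∧ ∃ i, v (i + g) = v i := ⟨m, hm, 0, hper 0⟩
  obtain ⟨hgpos, i, hgi⟩ := Nat.find_spec hex
  set g := Nat.find hex with hgdef
  have hgle : g ≤ m := Nat.find_le ⟨hm, 0, hper 0⟩
  have hg3 : 3 ≤ g := by
    rcases (by omega : g = 1 ∨ g = 2 ∨ 3 ≤ g) with h1 | h2' | h3
    · exfalso; rw [h1] at hgi; exact (hadj i).ne' hgi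
    · exfalso; rw [h2'] at hgi; exact h2 i hgi
    · exact h3
  -- u : the cyclic vertex sequence of the extracted cycle
  set u : ℕ → V := fun k => v (i + k) with hu
  have hinj : ∀ a b, a < g → b < g → u a = u b → a = b := by
    intro a b ha hb hab
    by_contra hne
    rcases Nat.lt_or_ge a b with hlt | hge
    · have : 0 < b - a ∧ ∃ j, v (j + (b - a)) = v j := by
        refine ⟨by omega, i + a, ?_⟩
        have e : i + a + (b - a) = i + b := by omega
        rw [e]; exact hab.symm
      exact Nat.find_min hex (by omega) this
    · have hlt' : b < a := by omega
      have : 0 < a - b ∧ ∃ j, v (j + (a - b)) = v j := by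
        refine ⟨by omega, i + b, ?_⟩
        have e : i + b + (a - b) = i + a := by omega
        rw [e]; exact hab
      exact Nat.find_min hex (by omega) this
  have hug : u g = u 0 := by
    show v (i + g) = v (i + 0)
    rw [Nat.add_zero]; exact hgi
  have hmod : ∀ a, a ≤ g → u a = u (a % g) := by
    intro a ha
    rcases Nat.lt_or_ge a g with h | h
    · rw [Nat.mod_eq_of_lt h]
    · have : a = g := by omega
      rw [this, Nat.mod_self]; exact hug
  have hinj' : ∀ a b, a ≤ g → b ≤ g → u a = u b → a % g = b % g := by
    intro a b ha hb hab
    apply hinj _ _ (Nat.mod_lt _ (by omega)) (Nat.mod_lt _ (by omega))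
    rw [← hmod a ha, ← hmod b hb]; exact hab
  -- build the cycle
  set w : ℕ → V := fun k => u (k + 1) with hw
  have hwadj : ∀ k, G.Adj (w k) (w (k+1)) := by
    intro k
    show G.Adj (v (i + (k+1))) (v (i + (k+1+1)))
    have e : i + (k+1+1) = (i + (k+1)) + 1 := by omega
    rw [e]; exact hadj _
  have huadj : ∀ k, G.Adj (u k) (u (k+1)) := by
    intro k
    show G.Adj (v (i + k)) (v (i + (k+1)))
    have e : i + (k+1) = (i + k) + 1 := by omega
    rw [e]; exact hadj _
  have hwend : w (g - 1) = u 0 := by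
    show u (g - 1 + 1) = u 0
    have e : g - 1 + 1 = g := by omega
    rw [e]; exact hug
  let p0 : G.Walk (u 1) (w (g-1)) := chainWalk w hwadj (g-1)
  let p : G.Walk (u 1) (u 0) := p0.copy rfl hwend
  have hpsupp : p.support = (List.range g).map w := by
    show (p0.copy rfl hwend).support = _
    rw [SimpleGraph.Walk.support_copy]
    rw [chainWalk_support]
    have e2 : g - 1 + 1 = g := by omega
    rw [e2]
  have hpedges : p.edges = (List.range (g-1)).map (fun k => s(w k, w (k+1))) := by
    show (p0.copy rfl hwend).edges = _
    rw [SimpleGraph.Walk.edges_copy, chainWalk_edges]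
  have hppath : p.IsPath := by
    rw [SimpleGraph.Walk.isPath_def, hpsupp]
    rw [List.nodup_map_iff_inj_on List.nodup_range]
    intro a ha b hb hab
    simp only [List.mem_range] at ha hb
    have h1 : a + 1 ≤ g := by omega
    have h2' : b + 1 ≤ g := by omega
    have := hinj' _ _ h1 h2' hab
    rcases Nat.lt_or_ge (a+1) g with hx | hx <;> rcases Nat.lt_or_ge (b+1) g with hy | hy
    · rw [Nat.mod_eq_of_lt hx, Nat.mod_eq_of_lt hy] at this; omega
    · have hbg : b + 1 = g := by omega
      rw [Nat.mod_eq_of_lt hx, hbg, Nat.mod_self] at this; omega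
    · have hag : a + 1 = g := by omega
      rw [Nat.mod_eq_of_lt hy, hag, Nat.mod_self] at this; omega
    · omega
  have hnotmem : s(u 0, u 1) ∉ p.edges := by
    rw [hpedges]
    intro hmem
    obtain ⟨k, hk, hk2⟩ := List.mem_map.mp hmem
    simp only [List.mem_range] at hk
    rw [Sym2.eq_iff] at hk2
    simp only [hw] at hk2
    rcases hk2 with ⟨ha, hb⟩ | ⟨ha, hb⟩
    · -- u (k+1) = u 0
      have := hinj' (k+1) 0 (by omega) (by omega) ha
      rw [Nat.zero_mod, Nat.mod_eq_of_lt (by omega)] at this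
      omega
    · -- u (k+1) = u 1, u (k+1+1) = u 0
      have h1 := hinj' (k+1) 1 (by omega) (by omega) ha
      rw [Nat.mod_eq_of_lt (by omega), Nat.mod_eq_of_lt (by omega)] at h1
      have hk0 : k = 0 := by omega
      subst hk0
      have h2'' := hinj' 2 0 (by omega) (by omega) hb
      rw [Nat.zero_mod, Nat.mod_eq_of_lt (by omega)] at h2''
      omega
  let c : G.Walk (u 0) (u 0) := SimpleGraph.Walk.cons (huadj 0) p
  have hcyc : c.IsCycle := (SimpleGraph.Walk.cons_isCycle_iff p (huadj 0)).mpr ⟨hppath, hnotmem⟩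
  have hclen : c.length = g := by
    show (SimpleGraph.Walk.cons (huadj 0) p).length = g
    rw [SimpleGraph.Walk.length_cons]
    show (p0.copy rfl hwend).length + 1 = g
    rw [SimpleGraph.Walk.length_copy, chainWalk_length]
    omega
  have := le_egirth.mp hgirth (u 0) c hcyc
  rw [hclen] at this
  have hg7 : 7 ≤ g := by exact_mod_cast this
  omega


end Graph

section Graph2



variable {V : Type} [Fintype V] [DecidableEq V] {G : SimpleGraph V} [DecidableRel G.Adj]


theorem next_ne (E : PlaneEmbedding G) (hδ : ∀ v, 2 ≤ G.degree v) (d : G.Dart) :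
    E.next d ≠ d := by
  intro h
  have hdeg : 1 < (G.neighborFinset d.fst).card := by
    rw [card_neighborFinset_eq_degree]; exact hδ d.fst
  obtain ⟨u, hu, hne⟩ := Finset.exists_mem_ne hdeg d.snd
  have hadj : G.Adj d.fst u := (SimpleGraph.mem_neighborFinset _ _ _).mp hu
  have hsc := E.cycle_of_fst d ⟨(d.fst, u), hadj⟩ rfl
  obtain ⟨k, hk⟩ := hsc
  have hfix : Function.IsFixedPt (⇑E.next) d := h
  have : (E.next ^ k) d = d := hfix.perm_zpow k
  rw [this] at hk
  exact hne (congrArg (fun d : G.Dart => d.snd) hk.symm)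

theorem facePerm_apply (E : PlaneEmbedding G) (d : G.Dart) :
    E.facePerm d = E.next d.symm := rfl

theorem facePerm_fst (E : PlaneEmbedding G) (d : G.Dart) :
    (E.facePerm d).fst = d.snd := by
  rw [facePerm_apply, E.next_fst]
  rfl

theorem facePerm_snd_ne (E : PlaneEmbedding G) (hδ : ∀ v, 2 ≤ G.degree v) (d : G.Dart) :
    (E.facePerm d).snd ≠ d.fst := by
  intro h
  have he : E.facePerm d = d.symm := by
    apply SimpleGraph.Dart.ext
    apply Prod.ext
    · rw [show (E.facePerm d).toProd.1 = (E.facePerm d).fst from rfl, facePerm_fst]; rfl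
    · exact h
  rw [facePerm_apply] at he
  exact next_ne E hδ d.symm he




theorem dart_window (E : PlaneEmbedding G) (hδ : ∀ v, 2 ≤ G.degree v)
    (hcon : ∀ v₁ v₂ v₃ : V, G.Adj v₁ v₂ → G.Adj v₂ v₃ → v₁ ≠ v₃ →
      9 < G.degree v₁ + G.degree v₂ + G.degree v₃) (d : G.Dart) :
    10 ≤ G.degree d.fst + G.degree d.snd + G.degree (E.facePerm d).snd := by
  have h1 : G.Adj d.fst d.snd := d.adj
  have h2 : G.Adj d.snd (E.facePerm d).snd := by
    have := (E.facePerm d).adj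
    rwa [facePerm_fst] at this
  have h3 : d.fst ≠ (E.facePerm d).snd := fun h => facePerm_snd_ne E hδ d h.symm
  have := hcon _ _ _ h1 h2 h3
  omega

theorem fiber_one_le (E : PlaneEmbedding G) [DecidableEq (Quotient E.faceSetoid)]
    (hδ : ∀ v, 2 ≤ G.degree v) (hgirth : 7 ≤ G.egirth)
    (hcon : ∀ v₁ v₂ v₃ : V, G.Adj v₁ v₂ → G.Adj v₂ v₃ → v₁ ≠ v₃ →
      9 < G.degree v₁ + G.degree v₂ + G.degree v₃)
    (q : Quotient E.faceSetoid) :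
    1 ≤ ∑ d ∈ Finset.univ.filter (fun d => Quotient.mk E.faceSetoid d = q),
        hw (G.degree d.fst) := by
  obtain ⟨d0, rfl⟩ := Quotient.exists_rep q
  set P := E.facePerm with hP
  have hmem : d0 ∈ Function.periodicPts ⇑P := by
    refine Function.mk_mem_periodicPts (orderOf_pos P) ?_
    show (⇑P)^[orderOf P] d0 = d0
    rw [← Equiv.Perm.coe_pow, pow_orderOf_eq_one]
    rfl
  set m := Function.minimalPeriod ⇑P d0 with hm
  have hmpos : 0 < m := Function.minimalPeriod_pos_of_mem_periodicPts hmem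
  have hdper : (⇑P)^[m] d0 = d0 := Function.iterate_minimalPeriod
  have hsucc : ∀ k, (⇑P)^[k+1] d0 = P ((⇑P)^[k] d0) := fun k =>
    Function.iterate_succ_apply' _ _ _
  have hfst : ∀ k, ((⇑P)^[k+1] d0).fst = ((⇑P)^[k] d0).snd := by
    intro k; rw [hsucc k]; exact facePerm_fst E _
  set x : ℕ → ℕ := fun k => G.degree ((⇑P)^[k] d0).fst with hx
  have hx2 : ∀ k, 2 ≤ x k := fun k => hδ _
  have hxper : ∀ k, x (k + m) = x k := by
    intro k; simp only [hx]
    rw [Function.iterate_add_apply, hdper]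
  have hxwin : ∀ k, 10 ≤ x k + x (k+1) + x (k+2) := by
    intro k
    have hd := dart_window E hδ hcon ((⇑P)^[k] d0)
    have e1 : x (k+1) = G.degree ((⇑P)^[k] d0).snd := by
      simp only [hx]; rw [hfst k]
    have e2 : x (k+2) = G.degree (P ((⇑P)^[k] d0)).snd := by
      simp only [hx]
      rw [show k+2 = (k+1)+1 from rfl, hfst (k+1), hsucc k]
    rw [e1, e2]
    exact hd
  have hm7 : 7 ≤ m := by
    refine seven_le_period hgirth (fun k => ((⇑P)^[k] d0).fst) ?_ ?_ m hmpos ?_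
    · intro k
      show G.Adj ((⇑P)^[k] d0).fst ((⇑P)^[k+1] d0).fst
      rw [hfst k]
      exact ((⇑P)^[k] d0).adj
    · intro k
      show ((⇑P)^[k+2] d0).fst ≠ ((⇑P)^[k] d0).fst
      rw [show k+2 = (k+1)+1 from rfl, hfst (k+1), hsucc k]
      exact facePerm_snd_ne E hδ _
    · intro k
      show ((⇑P)^[k+m] d0).fst = ((⇑P)^[k] d0).fst
      rw [Function.iterate_add_apply, hdper]
  have hset : Finset.univ.filter
      (fun d => Quotient.mk E.faceSetoid d = Quotient.mk E.faceSetoid d0)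
      = (Finset.range m).image (fun k => (⇑P)^[k] d0) := by
    ext d
    simp only [Finset.mem_filter, Finset.mem_univ, true_and, Finset.mem_image,
      Finset.mem_range]
    constructor
    · intro h
      have hsc : P.SameCycle d0 d := (Quotient.eq.mp h).symm
      obtain ⟨i, _, hieq⟩ := hsc.exists_pow_eq'
      refine ⟨i % m, Nat.mod_lt _ hmpos, ?_⟩
      rw [hm, Function.iterate_mod_minimalPeriod_eq]
      rw [← Equiv.Perm.coe_pow] at *
      exact hieq
    · rintro ⟨k, _, rfl⟩
      apply Quotient.sound
      show P.SameCycle ((⇑P)^[k] d0) d0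
      refine Equiv.Perm.SameCycle.symm ⟨(k : ℤ), ?_⟩
      rw [zpow_natCast, Equiv.Perm.coe_pow]
  rw [hset, Finset.sum_image (fun a ha b hb hab =>
    Function.iterate_injOn_Iio_minimalPeriod
      (Set.mem_Iio.mpr (Finset.mem_range.mp ha))
      (Set.mem_Iio.mpr (Finset.mem_range.mp hb)) hab)]
  exact seqLemma m hm7 x hx2 hxper hxwin

end Graph2
end Stmt13Aux

theorem stmt_13 {V : Type} [Fintype V] [DecidableEq V] (G : SimpleGraph V)
    [DecidableRel G.Adj]
    (hconn : G.Connected)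
    (hδ : ∀ v, 2 ≤ G.degree v)
    (E : PlaneEmbedding G) (hE : E.EulerFormula)
    (hgirth : 7 ≤ G.egirth) :
    ∃ v₁ v₂ v₃ : V, G.Adj v₁ v₂ ∧ G.Adj v₂ v₃ ∧ v₁ ≠ v₃ ∧
      G.degree v₁ + G.degree v₂ + G.degree v₃ ≤ 9 := by
  by_contra hcon
  push_neg at hcon
  classical
  set T := ∑ d : G.Dart, Stmt13Aux.hw (G.degree d.fst) with hT
  -- vertex-side evaluation of T
  have hv1 : ∑ v : V, ∑ d ∈ Finset.univ.filter (fun d : G.Dart => d.fst = v),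
      Stmt13Aux.hw (G.degree d.fst) = T :=
    Finset.sum_fiberwise_of_maps_to (fun d _ => Finset.mem_univ d.fst) _
  have hv2 : ∀ v : V, ∑ d ∈ Finset.univ.filter (fun d : G.Dart => d.fst = v),
      Stmt13Aux.hw (G.degree d.fst) = (G.degree v : ℚ) * Stmt13Aux.hw (G.degree v) := by
    intro v
    rw [Finset.sum_congr rfl (fun d hd => by rw [(Finset.mem_filter.mp hd).2]),
      Finset.sum_const, SimpleGraph.dart_fst_fiber_card_eq_degree, nsmul_eq_mul]
  have hv3 : ∀ v : V, (G.degree v : ℚ) * Stmt13Aux.hw (G.degree v)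
      = (G.degree v : ℚ)/2 - 1 := by
    intro v
    have h2 : 2 ≤ G.degree v := hδ v
    have hne : (G.degree v : ℚ) ≠ 0 := by
      have : 0 < G.degree v := by omega
      exact_mod_cast this.ne'
    unfold Stmt13Aux.hw
    field_simp
  have hvT : T = (∑ v : V, (G.degree v : ℚ))/2 - (Fintype.card V : ℚ) := by
    rw [← hv1, Finset.sum_congr rfl (fun v _ => (hv2 v).trans (hv3 v)),
      Finset.sum_sub_distrib, Finset.sum_const, Finset.card_univ, nsmul_eq_mul,
      mul_one, Finset.sum_div]
  have hdeg2 : ∑ v : V, (G.degree v : ℚ) = 2 * (G.edgeFinset.card : ℚ) := by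
    have h := SimpleGraph.sum_degrees_eq_twice_card_edges G
    exact_mod_cast congrArg (fun n : ℕ => (n : ℚ)) h
  -- face-side lower bound on T
  have hface : (Fintype.card (Quotient E.faceSetoid) : ℚ) ≤ T := by
    rw [hT, ← Finset.sum_fiberwise_of_maps_to
      (fun (d : G.Dart) _ => Finset.mem_univ (Quotient.mk E.faceSetoid d))
      (fun d => Stmt13Aux.hw (G.degree d.fst))]
    calc (Fintype.card (Quotient E.faceSetoid) : ℚ)
        = ∑ _q : Quotient E.faceSetoid, (1:ℚ) := by
          rw [Finset.sum_const, Finset.card_univ, nsmul_eq_mul, mul_one]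
      _ ≤ _ := Finset.sum_le_sum (fun q _ => Stmt13Aux.fiber_one_le E hδ hgirth hcon q)
  -- Euler's formula
  have hE' : (Fintype.card V : ℚ) - (G.edgeFinset.card : ℚ)
      + (Fintype.card (Quotient E.faceSetoid) : ℚ) = 2 := by
    have h := hE
    unfold PlaneEmbedding.EulerFormula PlaneEmbedding.faceCount at h
    rw [Nat.card_eq_fintype_card, Nat.card_eq_fintype_card, Nat.card_eq_fintype_card,
      ← SimpleGraph.edgeFinset_card] at h
    exact_mod_cast h
  linarith [hvT, hdeg2, hface, hE']
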